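/- No interior collisions for minimizers: let u ∈ H¹([0,T];ℝ²) with u(0)=q ≠ 0, u(T)=0, and suppose u minimizes the Maupertuis functional M_h(u) = (1/2)∫₀ᵀ|u̇|² · ∫₀ᵀ(h+V(u)) over all such paths, with M_h(u) > 0 and h + V(u) > 0 a.e. Then u(t) ≠ 0 for every t ∈ (0,T). -/

import Mathlib

open Set MeasureTheory intervalIntegral

noncomputable def Vpot (α : ℝ) (U : EuclideanSpace ℝ (Fin 2) → ℝ)
    (x : EuclideanSpace ℝ (Fin 2)) : ℝ :=
  ‖x‖ ^ (-α) * U (‖x‖⁻¹ • x)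

/-- The Maupertuis functional on `[0,T]`. -/
noncomputable def MaupertuisT (α h T : ℝ) (U : EuclideanSpace ℝ (Fin 2) → ℝ)
    (u : ℝ → EuclideanSpace ℝ (Fin 2)) : ℝ :=
  ((1/2) * ∫ s in (0:ℝ)..T, ‖deriv u s‖ ^ 2) *
    (∫ s in (0:ℝ)..T, (h + Vpot α U (u s)))

/-- Membership in the class of (H¹) collision paths from `q` to `0` on `[0,T]`. -/
def AdmPath (α h T : ℝ) (U : EuclideanSpace ℝ (Fin 2) → ℝ)
    (q : EuclideanSpace ℝ (Fin 2)) (u : ℝ → EuclideanSpace ℝ (Fin 2)) : Prop :=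
  ContinuousOn u (Icc 0 T) ∧ (∀ s ∈ Ioo (0:ℝ) T, DifferentiableAt ℝ u s) ∧
    u 0 = q ∧ u T = 0 ∧
    IntervalIntegrable (fun s => ‖deriv u s‖ ^ 2) volume 0 T ∧
    IntervalIntegrable (fun s => h + Vpot α U (u s)) volume 0 T

set_option maxHeartbeats 1000000 in
/-- No interior collisions for minimizers: if `u` minimizes the Maupertuis
functional among collision paths from `q ≠ 0` to `0`, with `M_h(u) > 0` and
`h + V(u) > 0` a.e., then `u(t) ≠ 0` for all `t ∈ (0,T)`. -/
theorem minimizer_no_interior_collision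
    (α h T : ℝ) (hα : α ∈ Set.Ioo (0:ℝ) 2) (hT : 0 < T)
    (U : EuclideanSpace ℝ (Fin 2) → ℝ) (hUcont : Continuous U)
    (hUpos : ∀ s : EuclideanSpace ℝ (Fin 2), ‖s‖ = 1 → 0 < U s)
    (q : EuclideanSpace ℝ (Fin 2)) (hq : q ≠ 0)
    (u : ℝ → EuclideanSpace ℝ (Fin 2))
    (hadm : AdmPath α h T U q u)
    (hmin : ∀ v, AdmPath α h T U q v → MaupertuisT α h T U u ≤ MaupertuisT α h T U v)
    (hpos : 0 < MaupertuisT α h T U u)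
    (haepos : ∀ᵐ t, t ∈ Icc (0:ℝ) T → 0 < h + Vpot α U (u t)) :
    ∀ t ∈ Ioo (0:ℝ) T, u t ≠ 0 := by
  rintro τ ⟨hτ0, hτT⟩ huτ
  obtain ⟨hcont, hdiff, hu0, huT, hA, hB⟩ := hadm
  set c : ℝ := τ / T with hc_def
  have hc : 0 < c := div_pos hτ0 hT
  have hc1 : c < 1 := (div_lt_one hT).2 hτT
  have hTc : T * c = τ := by rw [hc_def]; field_simp
  set v : ℝ → EuclideanSpace ℝ (Fin 2) := fun t => u (t * c) with hv_def
  -- restricted integrabilities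
  have hsub1 : uIcc (0:ℝ) τ ⊆ uIcc 0 T := by
    rw [uIcc_of_le hτ0.le, uIcc_of_le hT.le]
    exact Icc_subset_Icc le_rfl hτT.le
  have hsub2 : uIcc τ T ⊆ uIcc (0:ℝ) T := by
    rw [uIcc_of_le hτT.le, uIcc_of_le hT.le]
    exact Icc_subset_Icc hτ0.le le_rfl
  have hA1 : IntervalIntegrable (fun s => ‖deriv u s‖ ^ 2) volume 0 τ :=
    hA.mono_set hsub1
  have hA2 : IntervalIntegrable (fun s => ‖deriv u s‖ ^ 2) volume τ T :=
    hA.mono_set hsub2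
  have hB1 : IntervalIntegrable (fun s => h + Vpot α U (u s)) volume 0 τ :=
    hB.mono_set hsub1
  have hB2 : IntervalIntegrable (fun s => h + Vpot α U (u s)) volume τ T :=
    hB.mono_set hsub2
  have hτc : τ / c = T := by
    rw [hc_def]
    field_simp
  -- the map s ↦ s * c sends [0,T] into [0,τ]
  have hmap : ∀ s ∈ Icc (0:ℝ) T, s * c ∈ Icc 0 τ := by
    intro s hs
    constructor
    · exact mul_nonneg hs.1 hc.le
    · calc s * c ≤ T * c := by nlinarith [hs.2, hc.le]
        _ = τ := hTc
  have hmap' : ∀ s ∈ Ioc (0:ℝ) T, s * c ∈ Ioo 0 T := by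
    intro s hs
    refine ⟨mul_pos hs.1 hc, ?_⟩
    calc s * c ≤ T * c := by nlinarith [hs.2, hc.le]
      _ = τ := hTc
      _ < T := hτT
  -- derivative of v
  have hderiv : ∀ s, s * c ∈ Ioo (0:ℝ) T → deriv v s = c • deriv u (s * c) := by
    intro s hs
    have hu' := (hdiff _ hs).hasDerivAt
    have : HasDerivAt v (c • deriv u (s * c)) s := by
      have h2 : HasDerivAt (fun t : ℝ => t * c) c s := by
        simpa using (hasDerivAt_id s).mul_const c
      exact hu'.scomp s h2
    exact this.deriv
  -- v is admissible
  have hv_adm : AdmPath α h T U q v := by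
    refine ⟨?_, ?_, ?_, ?_, ?_, ?_⟩
    · exact hcont.comp (continuous_mul_right c).continuousOn
        (fun s hs => Icc_subset_Icc le_rfl hτT.le (hmap s hs))
    · intro s hs
      have hs' : s * c ∈ Ioo 0 T := hmap' s ⟨hs.1, hs.2.le⟩
      exact (hdiff _ hs').comp s (by fun_prop)
    · simp [hv_def, hu0]
    · simp [hv_def, hTc, huτ]
    · -- kinetic integrability
      have h1 := (hA1.comp_mul_right (c := c)).const_mul (c ^ 2)
      rw [zero_div, hτc] at h1
      refine h1.congr_ae ?_
      refine (ae_restrict_iff' measurableSet_uIoc).2 ?_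
      filter_upwards with s hs
      rw [uIoc_of_le hT.le] at hs
      simp only [hderiv s (hmap' s hs), norm_smul, mul_pow, Real.norm_eq_abs,
        sq_abs]
    · -- potential integrability
      have h1 := hB1.comp_mul_right (c := c)
      rw [zero_div, hτc] at h1
      exact h1
  -- compute the integrals of v
  have hAv : (∫ s in (0:ℝ)..T, ‖deriv v s‖ ^ 2)
      = c * ∫ s in (0:ℝ)..τ, ‖deriv u s‖ ^ 2 := by
    have e1 : (∫ s in (0:ℝ)..T, ‖deriv v s‖ ^ 2)
        = ∫ s in (0:ℝ)..T, c ^ 2 * ‖deriv u (s * c)‖ ^ 2 := by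
      refine integral_congr_ae ?_
      filter_upwards with s hs
      rw [uIoc_of_le hT.le] at hs
      simp only [hderiv s (hmap' s hs), norm_smul, mul_pow, Real.norm_eq_abs,
        sq_abs]
    rw [e1, intervalIntegral.integral_const_mul,
      integral_comp_mul_right (fun s => ‖deriv u s‖ ^ 2) hc.ne']
    simp only [zero_mul, hTc, smul_eq_mul]
    field_simp
  have hBv : (∫ s in (0:ℝ)..T, (h + Vpot α U (v s)))
      = c⁻¹ * ∫ s in (0:ℝ)..τ, (h + Vpot α U (u s)) := by
    have := integral_comp_mul_right (fun s => h + Vpot α U (u s)) hc.ne'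
      (a := 0) (b := T)
    simpa [hTc] using this
  -- decompose the integrals of u
  have hAsplit : (∫ s in (0:ℝ)..T, ‖deriv u s‖ ^ 2)
      = (∫ s in (0:ℝ)..τ, ‖deriv u s‖ ^ 2) + ∫ s in τ..T, ‖deriv u s‖ ^ 2 :=
    (integral_add_adjacent_intervals hA1 hA2).symm
  have hBsplit : (∫ s in (0:ℝ)..T, (h + Vpot α U (u s)))
      = (∫ s in (0:ℝ)..τ, (h + Vpot α U (u s)))
        + ∫ s in τ..T, (h + Vpot α U (u s)) :=
    (integral_add_adjacent_intervals hB1 hB2).symm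
  set A1 := ∫ s in (0:ℝ)..τ, ‖deriv u s‖ ^ 2 with hA1_def
  set A2 := ∫ s in τ..T, ‖deriv u s‖ ^ 2 with hA2_def
  set B1 := ∫ s in (0:ℝ)..τ, (h + Vpot α U (u s)) with hB1_def
  set B2 := ∫ s in τ..T, (h + Vpot α U (u s)) with hB2_def
  -- sign facts
  have hA1nn : 0 ≤ A1 := integral_nonneg hτ0.le (fun s _ => by positivity)
  have hA2nn : 0 ≤ A2 := integral_nonneg hτT.le (fun s _ => by positivity)
  have hB1nn : 0 ≤ B1 := by
    refine integral_nonneg_of_ae_restrict hτ0.le ?_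
    refine (ae_restrict_iff' measurableSet_Icc).2 ?_
    filter_upwards [haepos] with t ht htmem
    exact (ht ⟨htmem.1, htmem.2.trans hτT.le⟩).le
  have hB2pos : 0 < B2 := by
    rw [hB2_def, integral_pos_iff_support_of_nonneg_ae']
    · refine ⟨hτT, ?_⟩
      have hsub : (Ioc τ T : Set ℝ) ≤ᵐ[volume]
          ((Function.support (fun s => h + Vpot α U (u s)) ∩ Ioc τ T : Set ℝ)) := by
        filter_upwards [haepos] with t ht htmem
        exact ⟨(ht ⟨hτ0.le.trans htmem.1.le, htmem.2⟩).ne', htmem⟩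
      have := measure_mono_ae hsub
      have hIoc : (0:ENNReal) < volume (Ioc τ T) := by
        simp [Real.volume_Ioc, hτT, sub_pos]
      exact lt_of_lt_of_le hIoc this
    · rw [uIoc_of_le hτT.le]
      refine (ae_restrict_iff' measurableSet_Ioc).2 ?_
      filter_upwards [haepos] with t ht htmem
      exact (ht ⟨hτ0.le.trans htmem.1.le, htmem.2⟩).le
    · exact hB2
  -- Maupertuis values
  have hMu : MaupertuisT α h T U u = (1/2) * (A1 + A2) * (B1 + B2) := by
    rw [MaupertuisT, hAsplit, hBsplit]
  have hMv : MaupertuisT α h T U v = (1/2 * A1) * B1 := by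
    rw [MaupertuisT, hAv, hBv]
    field_simp
  have hle := hmin v hv_adm
  rw [hMu, hMv] at hle
  -- derive a contradiction
  rcases eq_or_lt_of_le hA1nn with hA1z | hA1pos
  · rw [hMu] at hpos
    nlinarith
  · nlinarith [mul_pos hA1pos hB2pos, mul_nonneg hA2nn hB1nn,
      mul_nonneg hA2nn hB2pos.le]
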